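/- Let ρ be a density matrix on a finite-dimensional complex Hilbert space and |φ⟩ a unit vector with ⟨φ|ρ|φ⟩ ≥ 1 − ε, where 0 ≤ ε < 1/2. Let |φ_max⟩ be a unit eigenvector of ρ corresponding to its largest eigenvalue. Then |⟨φ|φ_max⟩|² ≥ 1 − 2ε. -/

import Mathlib

open scoped BigOperators ComplexOrder
open Classical

noncomputable section
namespace QI

/-- The outer product `|v⟩⟨v|` of a vector with itself. -/
def outer {A : Type*} [Fintype A] (v : A → ℂ) : Matrix A A ℂ :=
  Matrix.of fun i j => v i * (starRingEnd ℂ) (v j)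

/-- The quadratic form `⟨v| M |v⟩`. -/
def qform {A : Type*} [Fintype A] (M : Matrix A A ℂ) (v : A → ℂ) : ℂ :=
  ∑ i, ∑ j, (starRingEnd ℂ) (v i) * M i j * v j

/-- The inner product `⟨v|w⟩` (antilinear in the first argument). -/
def inner' {A : Type*} [Fintype A] (v w : A → ℂ) : ℂ :=
  ∑ i, (starRingEnd ℂ) (v i) * w i

/-- A density matrix: positive semidefinite with trace one. -/
def IsDensityMatrix {A : Type*} [Fintype A] (ρ : Matrix A A ℂ) : Prop :=
  ρ.PosSemidef ∧ ρ.trace = 1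

/-- Partial trace over the first tensor factor (`Tr_A`). -/
def ptraceA {A B : Type*} [Fintype A] [Fintype B]
    (M : Matrix (A × B) (A × B) ℂ) : Matrix B B ℂ :=
  Matrix.of fun i j => ∑ a, M (a, i) (a, j)

/-- Partial trace over the second tensor factor (`Tr_B`). -/
def ptraceB {A B : Type*} [Fintype A] [Fintype B]
    (M : Matrix (A × B) (A × B) ℂ) : Matrix A A ℂ :=
  Matrix.of fun i j => ∑ b, M (i, b) (j, b)

/-- The von Neumann entropy (base 2) of a matrix, via its eigenvalues;
`0` if the matrix is not Hermitian.  The convention `0 · log₂ 0 = 0` holds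
since `Real.logb 2 0 = 0`. -/
def vnEntropy {A : Type*} [Fintype A] [DecidableEq A] (ρ : Matrix A A ℂ) : ℝ :=
  if h : ρ.IsHermitian then -∑ i, h.eigenvalues i * Real.logb 2 (h.eigenvalues i) else 0

section Helpers

open Matrix
set_option linter.unusedSectionVars false

variable {A : Type*} [Fintype A] [DecidableEq A]

lemma inner'_eq (v w : A → ℂ) : inner' v w = star v ⬝ᵥ w := rfl

lemma qform_eq (M : Matrix A A ℂ) (v : A → ℂ) : qform M v = star v ⬝ᵥ M *ᵥ v := by
  simp [qform, dotProduct, mulVec, Finset.mul_sum, mul_assoc]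

lemma conj_dot (a b : A → ℂ) : (starRingEnd ℂ) (star a ⬝ᵥ b) = star b ⬝ᵥ a := by
  simp [dotProduct, map_sum, mul_comm]

lemma outer_mulVec (u v : A → ℂ) : outer u *ᵥ v = (star u ⬝ᵥ v) • u := by
  funext i
  simp [outer, mulVec, dotProduct, Finset.mul_sum, mul_comm, mul_left_comm]

lemma outer_isHermitian (u : A → ℂ) : (outer u).IsHermitian := by
  ext i j
  simp [outer, Matrix.conjTranspose_apply, mul_comm]

lemma trace_outer (u : A → ℂ) : (outer u).trace = star u ⬝ᵥ u := by
  simp [Matrix.trace, Matrix.diag, outer, dotProduct, mul_comm]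

lemma spec_qform (M : Matrix A A ℂ) (hM : M.IsHermitian) (v : A → ℂ) :
    star v ⬝ᵥ M *ᵥ v = ∑ i, (hM.eigenvalues i : ℂ) *
      Complex.normSq ((star (hM.eigenvectorUnitary : Matrix A A ℂ) *ᵥ v) i) := by
  set U : Matrix A A ℂ := (hM.eigenvectorUnitary : Matrix A A ℂ) with hU
  set y := star U *ᵥ v with hy
  have hsy : star y = star v ᵥ* U := by
    rw [hy, star_mulVec, Matrix.star_eq_conjTranspose, conjTranspose_conjTranspose]
  have h1 : star v ⬝ᵥ M *ᵥ v
      = star y ⬝ᵥ ((Matrix.diagonal (RCLike.ofReal ∘ hM.eigenvalues)) *ᵥ y) := by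
    conv_lhs => rw [hM.spectral_theorem, Unitary.conjStarAlgAut_apply]
    rw [← mulVec_mulVec, ← mulVec_mulVec, dotProduct_mulVec, ← hsy, hy]
  rw [h1, dotProduct]
  apply Finset.sum_congr rfl
  intro i _
  rw [mulVec_diagonal]
  have h2 : (star y) i = (starRingEnd ℂ) (y i) := rfl
  have h3 : (RCLike.ofReal ∘ hM.eigenvalues) i = ((hM.eigenvalues i : ℝ) : ℂ) := rfl
  rw [h2, h3, Complex.normSq_eq_conj_mul_self]
  ring

lemma spec_norm (M : Matrix A A ℂ) (hM : M.IsHermitian) (v : A → ℂ) :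
    star v ⬝ᵥ v = ∑ i,
      (Complex.normSq ((star (hM.eigenvectorUnitary : Matrix A A ℂ) *ᵥ v) i) : ℂ) := by
  set U : Matrix A A ℂ := (hM.eigenvectorUnitary : Matrix A A ℂ) with hU
  set y := star U *ᵥ v with hy
  have h0 : star v ⬝ᵥ v = star y ⬝ᵥ y := by
    rw [hy, star_mulVec, Matrix.star_eq_conjTranspose, conjTranspose_conjTranspose,
      dotProduct_mulVec, vecMul_vecMul]
    have h4 : U * Uᴴ = 1 := by
      rw [← Matrix.star_eq_conjTranspose]
      exact (Matrix.mem_unitaryGroup_iff).mp hM.eigenvectorUnitary.2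
    rw [h4, vecMul_one]
  rw [h0, dotProduct]
  apply Finset.sum_congr rfl
  intro i _
  have h2 : (star y) i = (starRingEnd ℂ) (y i) := rfl
  rw [h2, Complex.normSq_eq_conj_mul_self]

lemma trace_eq_sum_eig (M : Matrix A A ℂ) (hM : M.IsHermitian) :
    M.trace = ∑ i, (hM.eigenvalues i : ℂ) := by
  set U : Matrix A A ℂ := (hM.eigenvectorUnitary : Matrix A A ℂ) with hU
  conv_lhs => rw [hM.spectral_theorem, Unitary.conjStarAlgAut_apply]
  rw [Matrix.trace_mul_cycle]
  have h4 : (star U) * U = 1 := (Matrix.mem_unitaryGroup_iff').mp hM.eigenvectorUnitary.2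
  rw [h4, Matrix.one_mul, Matrix.trace_diagonal]
  rfl

lemma re_qform_le_of_eig_le (M : Matrix A A ℂ) (hM : M.IsHermitian) (t : ℝ)
    (ht : ∀ i, hM.eigenvalues i ≤ t) (v : A → ℂ) :
    (star v ⬝ᵥ M *ᵥ v).re ≤ t * (star v ⬝ᵥ v).re := by
  rw [spec_qform M hM v, spec_norm M hM v, Complex.re_sum, Complex.re_sum]
  have h1 : ∀ i ∈ Finset.univ, ((hM.eigenvalues i : ℂ) *
      Complex.normSq ((star (hM.eigenvectorUnitary : Matrix A A ℂ) *ᵥ v) i)).re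
      ≤ t * ((Complex.normSq ((star (hM.eigenvectorUnitary : Matrix A A ℂ) *ᵥ v) i) : ℂ)).re := by
    intro i _
    simp only [← Complex.ofReal_mul, Complex.ofReal_re]
    exact mul_le_mul_of_nonneg_right (ht i) (Complex.normSq_nonneg _)
  calc _ ≤ _ := Finset.sum_le_sum h1
    _ = _ := by rw [← Finset.mul_sum]

lemma re_qform_le_trace (M : Matrix A A ℂ) (hM : M.PosSemidef) (v : A → ℂ) :
    (star v ⬝ᵥ M *ᵥ v).re ≤ M.trace.re * (star v ⬝ᵥ v).re := by
  have htr : M.trace.re = ∑ i, hM.1.eigenvalues i := by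
    rw [trace_eq_sum_eig M hM.1, Complex.re_sum]
    simp
  rw [spec_qform M hM.1 v, spec_norm M hM.1 v, Complex.re_sum, Complex.re_sum, htr]
  set n : A → ℝ := fun i =>
    Complex.normSq ((star (hM.1.eigenvectorUnitary : Matrix A A ℂ) *ᵥ v) i) with hn
  have h1 : ∀ i ∈ Finset.univ, ((hM.1.eigenvalues i : ℂ) * (n i : ℂ)).re
      ≤ hM.1.eigenvalues i * (∑ j, n j) := by
    intro i _
    simp only [← Complex.ofReal_mul, Complex.ofReal_re]
    refine mul_le_mul_of_nonneg_left ?_ (hM.eigenvalues_nonneg i)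
    exact Finset.single_le_sum (fun j _ => Complex.normSq_nonneg _) (Finset.mem_univ i)
  calc _ ≤ _ := Finset.sum_le_sum h1
    _ = _ := by rw [← Finset.sum_mul]; simp; exact Or.inl rfl

lemma decompose (ρ : Matrix A A ℂ) (hH : ρ.IsHermitian) (φmax : A → ℂ)
    (hφm : star φmax ⬝ᵥ φmax = 1) (lmax : ℝ) (hEig : ρ *ᵥ φmax = (lmax:ℂ) • φmax) (v : A → ℂ) :
    star v ⬝ᵥ ρ *ᵥ v
      = star (v - (star φmax ⬝ᵥ v) • φmax) ⬝ᵥ ρ *ᵥ (v - (star φmax ⬝ᵥ v) • φmax)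
        + ((Complex.normSq (star φmax ⬝ᵥ v) * lmax : ℝ) : ℂ) := by
  set d := star φmax ⬝ᵥ v with hd
  set w := v - d • φmax with hw
  have f1 : star φmax ⬝ᵥ w = 0 := by
    rw [hw, dotProduct_sub, dotProduct_smul, hφm, ← hd]
    simp
  have f2 : star w ⬝ᵥ φmax = 0 := by
    rw [← conj_dot, f1, map_zero]
  have f3 : star φmax ᵥ* ρ = (lmax : ℂ) • star φmax := by
    have h5 : star (ρ *ᵥ φmax) = star φmax ᵥ* ρᴴ := star_mulVec ρ φmax
    rw [hEig, hH.eq] at h5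
    rw [← h5, star_smul]
    simp
  have f4 : star φmax ⬝ᵥ ρ *ᵥ w = 0 := by
    rw [dotProduct_mulVec, f3, smul_dotProduct, f1, smul_zero]
  have hv : v = w + d • φmax := by rw [hw]; abel
  conv_lhs => rw [hv]
  rw [mulVec_add, mulVec_smul, hEig, star_add, star_smul, add_dotProduct, smul_dotProduct,
    dotProduct_add, dotProduct_add, f4, dotProduct_smul, dotProduct_smul, dotProduct_smul,
    f2]
  rw [dotProduct_smul, hφm]
  push_cast
  rw [Complex.normSq_eq_conj_mul_self]
  simp only [smul_eq_mul, smul_zero, mul_zero, add_zero, zero_add, mul_one, Complex.star_def]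
  ring

end Helpers

/-- If `⟨φ|ρ|φ⟩ ≥ 1 - ε` with `0 ≤ ε < 1/2` and `|φ_max⟩` is a unit eigenvector of `ρ`
for its largest eigenvalue, then `|⟨φ|φ_max⟩|² ≥ 1 - 2ε`. -/
theorem overlap_with_top_eigenvector
    {A : Type*} [Fintype A] [DecidableEq A]
    (ρ : Matrix A A ℂ) (hρ : IsDensityMatrix ρ)
    (φ φmax : A → ℂ) (hφ : inner' φ φ = 1) (hφmax : inner' φmax φmax = 1)
    (lmax : ℝ) (hEig : ρ.mulVec φmax = (lmax : ℂ) • φmax)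
    (hbig : ∀ i, hρ.1.1.eigenvalues i ≤ lmax)
    (ε : ℝ) (hε0 : 0 ≤ ε) (hε : ε < 1 / 2)
    (h : 1 - ε ≤ (qform ρ φ).re) :
    1 - 2 * ε ≤ Complex.normSq (inner' φ φmax) := by
  open Matrix in
  have hH : ρ.IsHermitian := hρ.1.1
  have hφm : star φmax ⬝ᵥ φmax = 1 := by rw [← inner'_eq]; exact hφmax
  have hφ1 : star φ ⬝ᵥ φ = 1 := by rw [← inner'_eq]; exact hφ
  set c : ℂ := star φmax ⬝ᵥ φ with hc
  set x : ℝ := Complex.normSq c with hx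
  set w : A → ℂ := φ - c • φmax with hw
  -- goal reduction
  have hgoal : Complex.normSq (inner' φ φmax) = x := by
    rw [inner'_eq, ← conj_dot, hx, Complex.normSq_conj]
  rw [hgoal]
  have hx0 : 0 ≤ x := Complex.normSq_nonneg _
  -- orthogonality facts
  have f1 : star φmax ⬝ᵥ w = 0 := by
    rw [hw, dotProduct_sub, dotProduct_smul, hφm, ← hc]
    simp
  have f2 : star w ⬝ᵥ φmax = 0 := by
    rw [← conj_dot, f1, map_zero]
  -- norm of w
  have hww : star w ⬝ᵥ w = ((1 - x : ℝ) : ℂ) := by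
    have e1 : star w ⬝ᵥ w = star w ⬝ᵥ φ - c * (star w ⬝ᵥ φmax) := by
      rw [hw]
      rw [dotProduct_sub, dotProduct_smul, smul_eq_mul]
    rw [e1, f2, mul_zero, sub_zero, hw, star_sub, star_smul, sub_dotProduct, smul_dotProduct,
      hφ1, ← hc]
    push_cast
    rw [hx, Complex.normSq_eq_conj_mul_self]
    simp only [smul_eq_mul, Complex.star_def]
  -- decomposition of the quadratic form at φ
  have hdec : star φ ⬝ᵥ ρ *ᵥ φ = star w ⬝ᵥ ρ *ᵥ w + ((x * lmax : ℝ) : ℂ) :=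
    decompose ρ hH φmax hφm lmax hEig φ
  -- the shifted matrix ρ' is PSD
  set P : Matrix A A ℂ := outer φmax with hP
  set ρ' : Matrix A A ℂ := ρ - (lmax : ℂ) • P with hρ'
  have hρ'H : ρ'.IsHermitian := by
    refine Matrix.IsHermitian.sub hH ?_
    unfold Matrix.IsHermitian
    rw [Matrix.conjTranspose_smul, (outer_isHermitian φmax).eq]
    simp [Complex.star_def, Complex.conj_ofReal]
    rfl
  have hqρ' : ∀ v : A → ℂ, star v ⬝ᵥ ρ' *ᵥ v
      = star (v - (star φmax ⬝ᵥ v) • φmax) ⬝ᵥ ρ *ᵥ (v - (star φmax ⬝ᵥ v) • φmax) := by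
    intro v
    have e2 : star v ⬝ᵥ ρ' *ᵥ v
        = star v ⬝ᵥ ρ *ᵥ v - (lmax : ℂ) * ((Complex.normSq (star φmax ⬝ᵥ v) : ℝ) : ℂ) := by
      rw [hρ', Matrix.sub_mulVec, dotProduct_sub, Matrix.smul_mulVec, dotProduct_smul,
        hP, outer_mulVec, dotProduct_smul, ← conj_dot φmax v]
      rw [Complex.normSq_eq_conj_mul_self]
      push_cast
      simp only [smul_eq_mul]
      ring
    rw [e2, decompose ρ hH φmax hφm lmax hEig v]
    push_cast
    ring
  have hρ'PSD : ρ'.PosSemidef := by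
    refine Matrix.PosSemidef.of_dotProduct_mulVec_nonneg hρ'H fun v => ?_
    rw [hqρ' v]
    exact hρ.1.dotProduct_mulVec_nonneg _
  -- trace of ρ'
  have htrρ' : ρ'.trace.re = 1 - lmax := by
    rw [hρ', Matrix.trace_sub, Matrix.trace_smul, hP, trace_outer, hφm, hρ.2]
    simp
  -- quadratic form at w bounded by (1-lmax)(1-x)
  have hQw : (star w ⬝ᵥ ρ *ᵥ w).re ≤ (1 - lmax) * (1 - x) := by
    have e3 : star w ⬝ᵥ ρ' *ᵥ w = star w ⬝ᵥ ρ *ᵥ w := by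
      rw [hqρ' w, f1, zero_smul, sub_zero]
    have := re_qform_le_trace ρ' hρ'PSD w
    rw [e3, htrρ', hww] at this
    simpa using this
  -- lmax ≤ 1
  have hup : lmax ≤ 1 := by
    have e4 : ((lmax : ℝ) : ℂ) = star φmax ⬝ᵥ ρ *ᵥ φmax := by
      rw [hEig, dotProduct_smul, hφm, smul_eq_mul, mul_one]
    have := re_qform_le_trace ρ hρ.1 φmax
    rw [← e4, hρ.2, hφm] at this
    simpa using this
  -- 1 - ε ≤ lmax
  have hq : 1 - ε ≤ (star φ ⬝ᵥ ρ *ᵥ φ).re := by rw [← qform_eq]; exact h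
  have hlow : 1 - ε ≤ lmax := by
    have := re_qform_le_of_eig_le ρ hρ.1.1 lmax hbig φ
    rw [hφ1] at this
    simp only [Complex.one_re, mul_one] at this
    exact hq.trans this
  -- key inequality
  have hkey : 1 - ε ≤ (1 - lmax) * (1 - x) + lmax * x := by
    have e5 : (star φ ⬝ᵥ ρ *ᵥ φ).re = (star w ⬝ᵥ ρ *ᵥ w).re + x * lmax := by
      rw [hdec]
      simp
    have := hq
    rw [e5] at this
    nlinarith [hQw]
  nlinarith [hkey, hup, hlow, hx0, hε0, hε, mul_nonneg hx0 hε0,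
    mul_nonneg (sub_nonneg.2 hup) hε0, mul_nonneg (sub_nonneg.2 hup) (sub_nonneg.2 hup)]

end QI
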